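/- If a quartic polynomial h(x) = x⁴ + ax² + bx + c has two distinct global minimum points α and β, then h(x) = (x−α)²(x−β)² + c', i.e., α + β = 0, a = −2α², b = 0, and the minimum value is c' = c − α⁴. -/
import Mathlib


/-- If the quartic `h(x) = x⁴ + ax² + bx + c` attains its global minimum at two
distinct points `α ≠ β`, then `b = 0`, `β = −α`, `a = −2α²`, and
`h(x) = (x² − α²)² + (c − α⁴)`. -/
theorem stmt_14 (a b c : ℝ) (h : ℝ → ℝ)
    (hh : ∀ x, h x = x ^ 4 + a * x ^ 2 + b * x + c)
    (α β : ℝ) (hαβ : α ≠ β)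
    (hα : ∀ y, h α ≤ h y) (hβ : ∀ y, h β ≤ h y) :
    b = 0 ∧ β = -α ∧ a = -2 * α ^ 2 ∧
    ∀ x, h x = (x ^ 2 - α ^ 2) ^ 2 + (c - α ^ 4) := by
  have hfun : h = fun x => x ^ 4 + a * x ^ 2 + b * x + c := funext hh
  have hd : ∀ x : ℝ, HasDerivAt h (4 * x ^ 3 + 2 * a * x + b) x := by
    intro x
    rw [hfun]
    have h1 : HasDerivAt (fun x : ℝ => x ^ 4 + a * x ^ 2 + b * x + c)
        ((4 : ℕ) * x ^ 3 + a * ((2 : ℕ) * x ^ 1) + b * 1) x := by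
      exact (((hasDerivAt_pow 4 x).add ((hasDerivAt_pow 2 x).const_mul a)).add
        ((hasDerivAt_id x).const_mul b)).add_const c
    convert h1 using 1
    push_cast
    ring
  have hminα : IsLocalMin h α := Filter.Eventually.of_forall hα
  have hminβ : IsLocalMin h β := Filter.Eventually.of_forall hβ
  have e1 : 4 * α ^ 3 + 2 * a * α + b = 0 := hminα.hasDerivAt_eq_zero (hd α)
  have e2 : 4 * β ^ 3 + 2 * a * β + b = 0 := hminβ.hasDerivAt_eq_zero (hd β)
  have e3 : α ^ 4 + a * α ^ 2 + b * α + c = β ^ 4 + a * β ^ 2 + b * β + c := by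
    have := le_antisymm (hα β) (hβ α)
    rwa [hh, hh] at this
  have hsub : α - β ≠ 0 := sub_ne_zero.mpr hαβ
  -- a = -2(α² + αβ + β²)
  have ha : a = -2 * (α ^ 2 + α * β + β ^ 2) := by
    have h4 : (α - β) * (4 * (α ^ 2 + α * β + β ^ 2) + 2 * a) = 0 := by
      linear_combination e1 - e2
    rcases mul_eq_zero.mp h4 with h' | h'
    · exact absurd h' hsub
    · linarith
  subst ha
  -- b = (α+β)³ from e3, and b = 4αβ(α+β) from e1
  have hb1 : b = (α + β) ^ 3 := by
    have h4 : (α - β) * ((α + β) ^ 3 - b) = 0 := by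
      linear_combination -e3
    rcases mul_eq_zero.mp h4 with h' | h'
    · exact absurd h' hsub
    · linarith
  have hb2 : b = 4 * α * β * (α + β) := by
    linear_combination e1
  have hs : α + β = 0 := by
    have h5 : (α + β) * (α - β) ^ 2 = 0 := by linear_combination hb2 - hb1
    rcases mul_eq_zero.mp h5 with h' | h'
    · exact h'
    · exact absurd (pow_eq_zero_iff (by norm_num) |>.mp h') hsub
  have hb : b = 0 := by rw [hb1, hs]; ring
  have hβα : β = -α := by linarith
  have ha' : -2 * (α ^ 2 + α * β + β ^ 2) = -2 * α ^ 2 := by rw [hβα]; ring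
  refine ⟨hb, hβα, ha', fun x => ?_⟩
  rw [hh, hb, ha']
  ring
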